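/- Suppose a nonnegative random variable model satisfies the one-point bound P(z ∈ H_ε) ≍ ε^s and the two-point bound P(w,z ∈ H_ε) ≤ c·min(ε^s, ε^{2s}/|w−z|^s), where H_ε is the ε-neighborhood of a random set H ⊆ ℂ. Then the upper bound holds: dim_H(H) ≤ 2 − s almost surely. -/

import Mathlib

open MeasureTheory Metric
open Filter Set
open scoped ENNReal NNReal Topology



lemma cover_aux (δ : ℝ) (hδ : 0 < δ) (m M : ℕ) (hM : (m:ℝ)/δ + 1 ≤ M)
    (x : ℂ) (hx : ‖x‖ ≤ m) :
    ∃ p : ℤ × ℤ, p ∈ Finset.Icc (-(M:ℤ)) (M:ℤ) ×ˢ Finset.Icc (-(M:ℤ)) (M:ℤ) ∧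
      dist x (⟨p.1 * δ, p.2 * δ⟩ : ℂ) < 2 * δ := by
  have key : ∀ t : ℝ, |t| ≤ m → (-(M:ℤ) ≤ ⌊t/δ⌋ ∧ ⌊t/δ⌋ ≤ M) := by
    intro t ht
    have habs := abs_le.mp ht
    have h1 : t / δ ≤ (m:ℝ)/δ := by gcongr; exact habs.2
    have h2 : -((m:ℝ)/δ) ≤ t / δ := by
      rw [← neg_div]
      gcongr
      exact habs.1
    constructor
    · rw [Int.le_floor]
      push_cast
      linarith
    · have h3 : (⌊t/δ⌋ : ℝ) ≤ (M:ℝ) := (Int.floor_le _).trans (by linarith)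
      exact_mod_cast h3
  refine ⟨(⌊x.re/δ⌋, ⌊x.im/δ⌋), ?_, ?_⟩
  · have hre := key x.re ((Complex.abs_re_le_norm x).trans hx)
    have him := key x.im ((Complex.abs_im_le_norm x).trans hx)
    simp only [Finset.mem_product, Finset.mem_Icc]
    exact ⟨hre, him⟩
  · have hre1 := Int.sub_floor_div_mul_nonneg x.re hδ
    have hre2 := Int.sub_floor_div_mul_lt x.re hδ
    have him1 := Int.sub_floor_div_mul_nonneg x.im hδ
    have him2 := Int.sub_floor_div_mul_lt x.im hδ
    rw [Complex.dist_eq]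
    calc ‖x - ⟨(⌊x.re/δ⌋:ℝ) * δ, (⌊x.im/δ⌋:ℝ) * δ⟩‖
        ≤ |(x - ⟨(⌊x.re/δ⌋:ℝ) * δ, (⌊x.im/δ⌋:ℝ) * δ⟩).re| +
          |(x - ⟨(⌊x.re/δ⌋:ℝ) * δ, (⌊x.im/δ⌋:ℝ) * δ⟩).im| :=
          Complex.norm_le_abs_re_add_abs_im _
      _ < 2 * δ := by
          show |x.re - (⌊x.re/δ⌋:ℝ) * δ| + |x.im - (⌊x.im/δ⌋:ℝ) * δ| < 2 * δ
          rw [abs_of_nonneg hre1, abs_of_nonneg him1]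
          linarith

lemma key_zero {Ω : Type*} [MeasurableSpace Ω]
    (P : Measure Ω) [IsProbabilityMeasure P] (H : Ω → Set ℂ)
    {s C₂ ε₀ : ℝ} (hC₂ : 0 < C₂) (hε₀ : 0 < ε₀)
    (hone : ∀ z : ℂ, ∀ ε : ℝ, 0 < ε → ε < ε₀ →
      (P {ω | z ∈ thickening ε (H ω)}).toReal ≤ C₂ * ε ^ s)
    {d : ℝ} (hd0 : 0 < d) (hds : 2 - s < d) (m : ℕ) :
    ∀ᵐ ω ∂P, μH[d] (H ω ∩ closedBall 0 m) = 0 := by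
  classical
  set ε : ℕ → ℝ := fun n => ε₀ * (1/2 : ℝ) ^ (n+1) with hε_def
  have hεpos : ∀ n, 0 < ε n := fun n => by positivity
  have hεlt : ∀ n, ε n < ε₀ := by
    intro n
    have h1 : ((1:ℝ)/2) ^ (n+1) < 1 :=
      pow_lt_one₀ (by norm_num) (by norm_num) (Nat.succ_ne_zero n)
    calc ε₀ * (1/2:ℝ)^(n+1) < ε₀ * 1 := by
          exact mul_lt_mul_of_pos_left h1 hε₀
      _ = ε₀ := mul_one _
  have hεle : ∀ n, ε n ≤ ε₀ := fun n => (hεlt n).le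
  clear_value ε
  set M : ℕ → ℕ := fun n => ⌈(m:ℝ) / (ε n / 2)⌉₊ + 1 with hM_def
  have hMbound : ∀ n, (m:ℝ) / (ε n / 2) + 1 ≤ M n := by
    intro n
    have := Nat.le_ceil ((m:ℝ) / (ε n / 2))
    push_cast [hM_def]
    linarith
  set G : ℕ → Finset ℂ := fun n =>
    (Finset.Icc (-(M n : ℤ)) (M n : ℤ) ×ˢ Finset.Icc (-(M n : ℤ)) (M n : ℤ)).image
      (fun p : ℤ × ℤ => (⟨p.1 * (ε n / 2), p.2 * (ε n / 2)⟩ : ℂ)) with hG_def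
  have hGcard : ∀ n, (G n).card ≤ (2 * M n + 1)^2 := by
    intro n
    calc (G n).card ≤ _ := Finset.card_image_le
      _ ≤ (2 * M n + 1)^2 := by
          rw [Finset.card_product, Int.card_Icc]
          have : ((M n : ℤ) + 1 - -(M n : ℤ)).toNat = 2 * M n + 1 := by omega
          rw [this]; ring_nf; omega
  set B : ℕ → ℂ → Set Ω := fun n z => {ω | z ∈ thickening (ε n) (H ω)} with hB_def
  set B' : ℕ → ℂ → Set Ω := fun n z => toMeasurable P (B n z) with hB'_def
  set f : ℕ → Ω → ℝ≥0∞ := fun n ω =>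
    ∑ z ∈ G n, (B' n z).indicator (fun _ => ENNReal.ofReal (2 * ε n) ^ d) ω with hf_def
  have hfmeas : ∀ n, Measurable (f n) := by
    intro n
    apply Finset.measurable_sum
    intro z _
    exact measurable_const.indicator (measurableSet_toMeasurable P _)
  -- one-point bound on measures
  have hPB : ∀ n (z : ℂ), P (B n z) ≤ ENNReal.ofReal (C₂ * ε n ^ s) := by
    intro n z
    rw [← ENNReal.ofReal_toReal (measure_ne_top P (B n z))]
    exact ENNReal.ofReal_le_ofReal (hone z (ε n) (hεpos n) (hεlt n))
  -- integral bound
  have hint : ∀ n, ∫⁻ ω, f n ω ∂P ≤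
      ((2 * M n + 1)^2 : ℕ) * (ENNReal.ofReal (2 * ε n) ^ d * ENNReal.ofReal (C₂ * ε n ^ s)) := by
    intro n
    rw [hf_def]
    rw [lintegral_finset_sum _ (fun z _ => measurable_const.indicator (measurableSet_toMeasurable P _))]
    have step : ∀ z ∈ G n, ∫⁻ ω, (B' n z).indicator (fun _ => ENNReal.ofReal (2 * ε n) ^ d) ω ∂P
        ≤ ENNReal.ofReal (2 * ε n) ^ d * ENNReal.ofReal (C₂ * ε n ^ s) := by
      intro z _
      rw [lintegral_indicator_const (measurableSet_toMeasurable P _),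
        measure_toMeasurable]
      exact mul_le_mul_right (hPB n z) _
    calc ∑ z ∈ G n, ∫⁻ ω, (B' n z).indicator (fun _ => ENNReal.ofReal (2 * ε n) ^ d) ω ∂P
        ≤ ∑ _z ∈ G n, ENNReal.ofReal (2 * ε n) ^ d * ENNReal.ofReal (C₂ * ε n ^ s) :=
          Finset.sum_le_sum step
      _ = (G n).card * (ENNReal.ofReal (2 * ε n) ^ d * ENNReal.ofReal (C₂ * ε n ^ s)) := by
          rw [Finset.sum_const, nsmul_eq_mul]
      _ ≤ _ := by
          apply mul_le_mul_left
          exact_mod_cast Nat.cast_le.mpr (hGcard n)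
  -- real-side geometric bound
  set η : ℝ := d + s - 2 with hη_def
  have hη : 0 < η := by simp only [hη_def]; linarith
  set A : ℝ := 4*(m:ℝ) + 5*ε₀ with hA_def
  have hA : 0 < A := by positivity
  set ρ : ℝ := (1/2:ℝ) ^ η with hρ_def
  have hρ0 : 0 < ρ := Real.rpow_pos_of_pos (by norm_num) _
  have hρ1 : ρ < 1 := Real.rpow_lt_one (by norm_num) (by norm_num) hη
  set K : ℝ := A^2 * 2^d * C₂ * ε₀^η * ρ with hK_def
  have hK : 0 < K := by
    have h2d : (0:ℝ) < (2:ℝ)^d := Real.rpow_pos_of_pos (by norm_num) _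
    have hε₀η : (0:ℝ) < ε₀^η := Real.rpow_pos_of_pos hε₀ _
    positivity
  have hM1 : ∀ n, (2*(M n) + 1 : ℝ) * ε n ≤ A := by
    intro n
    have hc : ((M n : ℝ)) ≤ 2*(m:ℝ)/(ε n) + 2 := by
      have h1 : ((⌈(m:ℝ) / (ε n / 2)⌉₊ : ℝ)) < (m:ℝ) / (ε n / 2) + 1 :=
        Nat.ceil_lt_add_one (div_nonneg (Nat.cast_nonneg m) (by linarith [hεpos n]))
      have h2 : (m:ℝ) / (ε n / 2) = 2*(m:ℝ)/(ε n) := by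
        rw [div_div_eq_mul_div]; ring_nf
      rw [hM_def]
      push_cast
      linarith
    have h3 : (2*(m:ℝ)/(ε n)) * ε n = 2*(m:ℝ) := div_mul_cancel₀ _ (hεpos n).ne'
    have h4 : ε n ≤ ε₀ := hεle n
    have h5 : 0 < ε n := hεpos n
    nlinarith
  have hsq : ∀ n, ((2*(M n)+1:ℝ) * ε n)^2 ≤ A^2 := fun n =>
    pow_le_pow_left₀ (by have := hεpos n; positivity) (hM1 n) 2
  have eρ : ∀ n, (ε n)^η = ε₀^η * ρ^(n+1) := by
    intro n
    have h1 : ((1/2:ℝ)^(n+1))^η = ρ^(n+1) := by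
      rw [hρ_def, ← Real.rpow_natCast ((1/2:ℝ)^η) (n+1), ← Real.rpow_natCast (1/2:ℝ) (n+1),
        ← Real.rpow_mul (by norm_num), ← Real.rpow_mul (by norm_num), mul_comm]
    simp only [hε_def]
    rw [Real.mul_rpow hε₀.le (by positivity), h1]
  have hg : ∀ n, ((2*(M n)+1:ℝ))^2 * ((2*ε n)^d * (C₂ * (ε n)^s)) ≤ K * ρ^n := by
    intro n
    have e1 : (2*ε n)^d = 2^d * (ε n)^d := Real.mul_rpow (by norm_num) (hεpos n).le
    have e2 : (ε n)^((2:ℕ):ℝ) * (ε n)^η = (ε n)^d * (ε n)^s := by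
      rw [← Real.rpow_add (hεpos n), ← Real.rpow_add (hεpos n)]
      norm_num [hη_def]
    have e2' : (ε n)^(2:ℕ) * (ε n)^η = (ε n)^d * (ε n)^s := by
      rw [← e2, Real.rpow_natCast]
    calc ((2*(M n)+1:ℝ))^2 * ((2*ε n)^d * (C₂ * (ε n)^s))
        = ((2*(M n)+1:ℝ) * ε n)^2 * (2^d * C₂ * (ε n)^η) := by
          rw [e1]
          rw [show (2:ℝ)^d * ε n ^ d * (C₂ * ε n ^ s) = (ε n ^ d * ε n ^ s) * ((2:ℝ)^d * C₂) by
            ring, ← e2']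
          ring
      _ ≤ A^2 * (2^d * C₂ * (ε n)^η) := by
          have h2d : (0:ℝ) < (2:ℝ)^d := Real.rpow_pos_of_pos (by norm_num) _
          have hεη : (0:ℝ) < (ε n)^η := Real.rpow_pos_of_pos (hεpos n) _
          apply mul_le_mul_of_nonneg_right (hsq n) (by positivity)
      _ = K * ρ^n := by rw [eρ n, hK_def]; ring
  have hint2 : ∀ n, ∫⁻ ω, f n ω ∂P ≤ ENNReal.ofReal (K * ρ^n) := by
    intro n
    refine (hint n).trans ?_
    have h2ε : (0:ℝ) < 2 * ε n := by have := hεpos n; linarith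
    have e1 : (ENNReal.ofReal (2 * ε n)) ^ d = ENNReal.ofReal ((2 * ε n)^d) :=
      ENNReal.ofReal_rpow_of_pos h2ε
    have e2 : (((2 * M n + 1)^2 : ℕ) : ℝ≥0∞) = ENNReal.ofReal (((2*(M n)+1:ℝ))^2) := by
      rw [← ENNReal.ofReal_natCast]
      norm_num
    rw [e1, e2, ← ENNReal.ofReal_mul (by positivity), ← ENNReal.ofReal_mul (by positivity)]
    exact ENNReal.ofReal_le_ofReal (hg n)
  have hsum_ne : ∑' n, ∫⁻ ω, f n ω ∂P ≠ ⊤ := by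
    have h1 : ∀ n, ENNReal.ofReal (K * ρ^n) = ENNReal.ofReal K * (ENNReal.ofReal ρ)^n := by
      intro n
      rw [ENNReal.ofReal_mul hK.le, ENNReal.ofReal_pow hρ0.le]
    have h2 : ∑' n, ENNReal.ofReal (K * ρ^n) = ENNReal.ofReal K * (1 - ENNReal.ofReal ρ)⁻¹ := by
      simp_rw [h1]
      rw [ENNReal.tsum_mul_left, ENNReal.tsum_geometric]
    refine ne_top_of_le_ne_top ?_ (ENNReal.tsum_le_tsum hint2)
    rw [h2]
    apply ENNReal.mul_ne_top ENNReal.ofReal_ne_top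
    rw [Ne, ENNReal.inv_eq_top, tsub_eq_zero_iff_le]
    exact (ENNReal.ofReal_lt_one.mpr hρ1).not_ge
  -- a.e. convergence of f n ω to 0
  have hae : ∀ᵐ ω ∂P, Tendsto (fun n => f n ω) atTop (𝓝 0) := by
    have h1 : ∫⁻ ω, ∑' n, f n ω ∂P ≠ ⊤ := by
      rw [lintegral_tsum (fun n => (hfmeas n).aemeasurable)]
      exact hsum_ne
    filter_upwards [ae_lt_top (Measurable.ennreal_tsum hfmeas) h1] with ω hω
    exact ENNReal.tendsto_atTop_zero_of_tsum_ne_top hω.ne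
  -- conclusion per ω
  filter_upwards [hae] with ω htend
  refine le_antisymm ?_ zero_le
  set t : ∀ n : ℕ, ↥(G n) → Set ℂ := fun n i =>
    if (i:ℂ) ∈ thickening (ε n) (H ω) then ball (i:ℂ) (ε n) else ∅ with ht_def
  have hr : Tendsto (fun n => ENNReal.ofReal (2 * ε n)) atTop (𝓝 0) := by
    have h0 : Tendsto (fun n : ℕ => (1/2:ℝ)^n) atTop (𝓝 0) :=
      tendsto_pow_atTop_nhds_zero_of_lt_one (by norm_num) (by norm_num)
    have h1 : Tendsto (fun n : ℕ => 2 * ε n) atTop (𝓝 0) := by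
      have := h0.const_mul (2 * ε₀ * (1/2))
      simp only [mul_zero] at this
      convert this using 2 with n
      simp only [hε_def, pow_succ]
      ring
    have := ENNReal.tendsto_ofReal h1
    rwa [ENNReal.ofReal_zero] at this
  have ht : ∀ᶠ n in atTop, ∀ i, EMetric.diam (t n i) ≤ ENNReal.ofReal (2 * ε n) := by
    refine Eventually.of_forall fun n i => ?_
    rw [ht_def]
    by_cases hi : (i:ℂ) ∈ thickening (ε n) (H ω)
    · simp only [hi, if_pos]
      rw [← Metric.emetric_ball]
      calc EMetric.diam _ ≤ 2 * ENNReal.ofReal (ε n) := EMetric.diam_ball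
        _ = ENNReal.ofReal (2 * ε n) := by
            rw [ENNReal.ofReal_mul (by norm_num : (0:ℝ) ≤ 2), ENNReal.ofReal_ofNat]
    · simp only [hi, if_neg, if_false, EMetric.diam_empty]
      show ediam (∅ : Set ℂ) ≤ _
      rw [ediam_empty]
      exact zero_le
  have hst : ∀ᶠ n in atTop, (H ω ∩ closedBall 0 m) ⊆ ⋃ i, t n i := by
    refine Eventually.of_forall fun n x hx => ?_
    have hxm : ‖x‖ ≤ (m:ℝ) := by
      have := hx.2
      rwa [mem_closedBall, Complex.dist_eq, sub_zero] at this
    obtain ⟨p, hp, hdist⟩ := cover_aux (ε n / 2) (by have := hεpos n; positivity) m (M n)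
      (hMbound n) x hxm
    set z : ℂ := ⟨p.1 * (ε n / 2), p.2 * (ε n / 2)⟩ with hz_def
    have hzG : z ∈ G n := Finset.mem_image_of_mem _ hp
    have hdist' : dist x z < ε n := by
      have : 2 * (ε n / 2) = ε n := by ring
      rwa [this] at hdist
    have hzth : z ∈ thickening (ε n) (H ω) :=
      mem_thickening_iff.mpr ⟨x, hx.1, by rwa [dist_comm]⟩
    refine mem_iUnion.mpr ⟨⟨z, hzG⟩, ?_⟩
    rw [ht_def]
    simp only [hzth, if_pos]
    exact mem_ball.mpr hdist'
  have hle := MeasureTheory.Measure.hausdorffMeasure_le_liminf_sum d (H ω ∩ closedBall 0 m)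
    (fun n => ENNReal.ofReal (2 * ε n)) hr t ht hst
  have hfs : ∀ n, ∑ i : ↥(G n), EMetric.diam (t n i) ^ d ≤ f n ω := by
    intro n
    have e : ∑ i : ↥(G n), EMetric.diam (t n i) ^ d
        = ∑ z ∈ G n, EMetric.diam
            (if z ∈ thickening (ε n) (H ω) then ball z (ε n) else ∅) ^ d :=
      Finset.sum_coe_sort (G n)
        (fun z => EMetric.diam (if z ∈ thickening (ε n) (H ω) then ball z (ε n) else ∅) ^ d)
    rw [e, hf_def]
    refine Finset.sum_le_sum fun z _ => ?_
    by_cases hz : z ∈ thickening (ε n) (H ω)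
    · rw [if_pos hz]
      have hωB : ω ∈ B' n z := subset_toMeasurable P _ hz
      rw [Set.indicator_of_mem hωB]
      apply ENNReal.rpow_le_rpow _ hd0.le
      rw [← Metric.emetric_ball]
      calc EMetric.diam _ ≤ 2 * ENNReal.ofReal (ε n) := EMetric.diam_ball
        _ = ENNReal.ofReal (2 * ε n) := by
            rw [ENNReal.ofReal_mul (by norm_num : (0:ℝ) ≤ 2), ENNReal.ofReal_ofNat]
    · rw [if_neg hz]
      show ediam (∅ : Set ℂ) ^ d ≤ _
      rw [ediam_empty, ENNReal.zero_rpow_of_pos hd0]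
      exact zero_le
  calc μH[d] (H ω ∩ closedBall 0 m)
      ≤ liminf (fun n => ∑ i : ↥(G n), EMetric.diam (t n i) ^ d) atTop := hle
    _ ≤ liminf (fun n => f n ω) atTop := liminf_le_liminf (Eventually.of_forall hfs)
    _ = 0 := htend.liminf_eq


/-- Upper-bound half of the dimension proposition: if the probability that a point lies
in the `ε`-neighborhood `H_ε` of a random set `H ⊆ ℂ` is comparable to `ε^s`, and the
two-point probabilities satisfy
`P(w,z ∈ H_ε) ≤ c·min(ε^s, ε^{2s}/|w−z|^s)`, then `dim_H(H) ≤ 2 − s` almost surely. -/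
theorem dimH_upper_bound {Ω : Type*} [MeasurableSpace Ω]
    (P : Measure Ω) [IsProbabilityMeasure P] (H : Ω → Set ℂ)
    (s : ℝ) (hs0 : 0 ≤ s) (hs2 : s ≤ 2)
    (C₁ C₂ c ε₀ : ℝ) (hC₁ : 0 < C₁) (hC₂ : 0 < C₂) (hc : 0 < c) (hε₀ : 0 < ε₀)
    (hone : ∀ z : ℂ, ∀ ε : ℝ, 0 < ε → ε < ε₀ →
      C₁ * ε ^ s ≤ (P {ω | z ∈ thickening ε (H ω)}).toReal ∧
      (P {ω | z ∈ thickening ε (H ω)}).toReal ≤ C₂ * ε ^ s)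
    (htwo : ∀ w z : ℂ, w ≠ z → ∀ ε : ℝ, 0 < ε → ε < ε₀ →
      (P {ω | w ∈ thickening ε (H ω) ∧ z ∈ thickening ε (H ω)}).toReal ≤
        min (c * ε ^ s) (c * ε ^ (2 * s) / dist w z ^ s)) :
    ∀ᵐ ω ∂P, dimH (H ω) ≤ ENNReal.ofReal (2 - s) := by
  have key : ∀ k m : ℕ, ∀ᵐ ω ∂P,
      μH[2 - s + 1/((k:ℝ)+1)] (H ω ∩ closedBall 0 m) = 0 := by
    intro k m
    have hk : (0:ℝ) < 1/((k:ℝ)+1) := by positivity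
    exact key_zero P H hC₂ hε₀ (fun z ε h1 h2 => (hone z ε h1 h2).2)
      (by linarith) (by linarith) m
  have key' : ∀ᵐ ω ∂P, ∀ k m : ℕ,
      μH[2 - s + 1/((k:ℝ)+1)] (H ω ∩ closedBall 0 m) = 0 := by
    rw [ae_all_iff]
    intro k
    rw [ae_all_iff]
    intro m
    exact key k m
  filter_upwards [key'] with ω hω
  have hcover : H ω = ⋃ m : ℕ, (H ω ∩ closedBall 0 m) := by
    ext x
    simp only [mem_iUnion, mem_inter_iff, mem_closedBall, dist_zero_right]
    constructor
    · intro hx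
      obtain ⟨m, hm⟩ := exists_nat_ge (‖x‖)
      exact ⟨m, hx, hm⟩
    · rintro ⟨m, h, _⟩
      exact h
  rw [hcover, dimH_iUnion]
  refine iSup_le fun m => dimH_le fun d' hd' => ?_
  by_contra hlt
  push_neg at hlt
  have hd'pos : (0:ℝ) < (d' : ℝ) := by
    have h1 : (0:ℝ≥0∞) < (d' : ℝ≥0∞) := lt_of_le_of_lt zero_le hlt
    have h2 : (0:ℝ≥0) < d' := by exact_mod_cast h1
    exact_mod_cast h2
  have h2s : 2 - s < (d' : ℝ) := by
    rw [show ((d' : ℝ≥0) : ℝ≥0∞) = ENNReal.ofReal (d' : ℝ) by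
      rw [ENNReal.ofReal_coe_nnreal]] at hlt
    exact (ENNReal.ofReal_lt_ofReal_iff hd'pos).mp hlt
  obtain ⟨k, hk⟩ := exists_nat_one_div_lt (show (0:ℝ) < (d':ℝ) - (2 - s) by linarith)
  have hmono := MeasureTheory.Measure.hausdorffMeasure_mono
    (show 2 - s + 1/((k:ℝ)+1) ≤ (d':ℝ) by linarith) (H ω ∩ closedBall 0 m)
  rw [hω k m, hd'] at hmono
  simp at hmono
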